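/- arXiv:2010.02699 — 3 statements merged into one kernel-verified Lean document; each statement's English description precedes it below -/
import Mathlib

section
/- Let N ≥ 1, let τ and τ' be permutations of {1,…,N}, and let Γ, g be N×N complex matrices with det g ≠ 0. Suppose that in ℂ[X_1,…,X_N,Y_1,…,Y_N], for every l = 1,…,N, the identity Σ_{k=1}^N g_{l,k}·X_k·Y_{τ(k)} = (Σ_{i=1}^N Γ_{l,i}·X_i)·(Σ_{j=1}^N conj(Γ_{τ'(l),j})·Y_j) holds. Then det Γ ≠ 0, and there exists a permutation π of {1,…,N} such that for every l: Γ_{l,k} ≠ 0 exactly when k = π(l); τ(π(l)) = π(τ'(l)); g_{l,k} = 0 for every k ≠ π(l); and g_{l,π(l)} = Γ_{l,π(l)}·conj(Γ_{τ'(l),τ(π(l))}) ≠ 0. -/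
noncomputable section

open MvPolynomial

/-- Let `τ, τ'` be permutations of `{1,…,N}` and `Γ, g` be `N×N` complex
matrices with `det g ≠ 0`. If in `ℂ[X_1,…,X_N,Y_1,…,Y_N]` (here `X_k = X (Sum.inl k)`,
`Y_j = X (Sum.inr j)`) we have, for every `l`,
`Σ_k g_{l,k}·X_k·Y_{τ(k)} = (Σ_i Γ_{l,i}·X_i)·(Σ_j conj(Γ_{τ'(l),j})·Y_j)`,
then `det Γ ≠ 0` and there is a permutation `π` such that for every `l`:
`Γ_{l,k} ≠ 0` exactly when `k = π(l)`; `τ(π(l)) = π(τ'(l))`; `g_{l,k} = 0` for `k ≠ π(l)`;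
and `g_{l,π(l)} = Γ_{l,π(l)}·conj(Γ_{τ'(l),τ(π(l))}) ≠ 0`. -/
theorem linear_part_permutation_structure (N : ℕ) (hN : 1 ≤ N)
    (τ τ' : Equiv.Perm (Fin N)) (Γ g : Matrix (Fin N) (Fin N) ℂ) (hg : g.det ≠ 0)
    (h : ∀ l : Fin N,
        (∑ k : Fin N, C (g l k) * X (Sum.inl k) * X (Sum.inr (τ k))
            : MvPolynomial (Fin N ⊕ Fin N) ℂ) =
          (∑ i : Fin N, C (Γ l i) * X (Sum.inl i)) *
            (∑ j : Fin N, C ((starRingEnd ℂ) (Γ (τ' l) j)) * X (Sum.inr j))) :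
    Γ.det ≠ 0 ∧ ∃ π : Equiv.Perm (Fin N), ∀ l : Fin N,
      (∀ k : Fin N, Γ l k ≠ 0 ↔ k = π l) ∧
      τ (π l) = π (τ' l) ∧
      (∀ k : Fin N, k ≠ π l → g l k = 0) ∧
      g l (π l) = Γ l (π l) * (starRingEnd ℂ) (Γ (τ' l) (τ (π l))) ∧
      g l (π l) ≠ 0 := by
  -- key coefficient relation
  have key : ∀ l i j : Fin N,
      Γ l i * (starRingEnd ℂ) (Γ (τ' l) j) = if j = τ i then g l i else 0 := by
    intro l i j
    have := congrArg (eval (Sum.elim (fun k => if k = i then (1:ℂ) else 0)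
        (fun k => if k = j then (1:ℂ) else 0))) (h l)
    simp only [map_sum, map_mul, eval_C, eval_X, Sum.elim_inl, Sum.elim_inr,
      mul_ite, ite_mul, mul_one, mul_zero, zero_mul, one_mul,
      Finset.sum_ite_eq', Finset.mem_univ, if_true] at this
    rw [← this, Finset.sum_eq_single i]
    · simp [eq_comm]
    · intro b _ hb; simp [hb]
    · simp
  -- each row of `g` has a nonzero entry
  have grow : ∀ l : Fin N, ∃ k, g l k ≠ 0 := by
    intro l
    by_contra hc
    push_neg at hc
    exact hg (Matrix.det_eq_zero_of_row_eq_zero l hc)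
  choose π0 hπ0 using grow
  have keyπ : ∀ l, Γ l (π0 l) * (starRingEnd ℂ) (Γ (τ' l) (τ (π0 l))) = g l (π0 l) := by
    intro l; simpa using key l (π0 l) (τ (π0 l))
  have hΓrow : ∀ l, Γ l (π0 l) ≠ 0 := fun l hz => hπ0 l (by rw [← keyπ l, hz, zero_mul])
  have hΓrow' : ∀ l, Γ (τ' l) (τ (π0 l)) ≠ 0 := by
    intro l hz
    exact hπ0 l (by rw [← keyπ l, hz, map_zero, mul_zero])
  -- uniqueness of the nonzero entry in each row of Γ
  have huniq : ∀ l i : Fin N, Γ l i ≠ 0 → i = π0 l := by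
    intro l i hi
    by_contra hne
    have h2 := key l i (τ (π0 l))
    rw [if_neg (fun hc => hne ((τ.injective hc).symm))] at h2
    rcases mul_eq_zero.mp h2 with h3 | h3
    · exact hi h3
    · exact hΓrow' l (by simpa using h3)
  have hiff : ∀ l k : Fin N, Γ l k ≠ 0 ↔ k = π0 l :=
    fun l k => ⟨huniq l k, fun hk => hk ▸ hΓrow l⟩
  have hΓzero : ∀ l k : Fin N, k ≠ π0 l → Γ l k = 0 := by
    intro l k hk
    by_contra hz
    exact hk (huniq l k hz)
  -- equivariance
  have hequiv : ∀ l, τ (π0 l) = π0 (τ' l) := fun l => huniq (τ' l) (τ (π0 l)) (hΓrow' l)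
  -- off-diagonal entries of g vanish
  have goff : ∀ l k : Fin N, k ≠ π0 l → g l k = 0 := by
    intro l k hk
    have h2 := key l k (τ k)
    rw [if_pos rfl] at h2
    rw [← h2, hΓzero l k hk, zero_mul]
  -- π0 is injective, hence bijective
  have hinj : Function.Injective π0 := by
    intro a b hab
    by_contra hne
    -- then some column is missed by π0, making a zero column of g
    have hnotsurj : ¬ Function.Surjective π0 := fun hs =>
      hne ((Finite.injective_iff_surjective.mpr hs) hab)
    obtain ⟨c, hc⟩ := not_forall.mp hnotsurj
    push_neg at hc
    apply hg
    apply Matrix.det_eq_zero_of_column_eq_zero c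
    intro l
    exact goff l c (fun hcl => hc l hcl.symm)
  let π : Equiv.Perm (Fin N) := Equiv.ofBijective π0 ⟨hinj, Finite.injective_iff_surjective.mp hinj⟩
  have hπ : ∀ l, π l = π0 l := fun l => rfl
  -- determinant of Γ
  have hΓfac : Γ = Matrix.diagonal (fun l => Γ l (π0 l)) * π.permMatrix ℂ := by
    ext l k
    rw [Matrix.mul_apply, Finset.sum_eq_single l]
    · by_cases hk : k = π0 l
      · simp [Equiv.Perm.permMatrix, PEquiv.toMatrix_apply, Equiv.toPEquiv_apply, hπ, hk]
      · simp [Equiv.Perm.permMatrix, PEquiv.toMatrix_apply, Equiv.toPEquiv_apply, hπ,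
          hΓzero l k hk, Ne.symm hk, hk]
    · intro b _ hb
      rw [Matrix.diagonal_apply_ne _ (Ne.symm hb), zero_mul]
    · simp
  have hdet : Γ.det ≠ 0 := by
    rw [hΓfac, Matrix.det_mul, Matrix.det_permutation, Matrix.det_diagonal]
    apply mul_ne_zero
    · exact Finset.prod_ne_zero_iff.mpr fun l _ => hΓrow l
    · rcases Int.units_eq_one_or (Equiv.Perm.sign π) with h1 | h1 <;> simp [h1]
  refine ⟨hdet, π, fun l => ⟨hiff l, ?_, ?_, ?_, ?_⟩⟩
  · rw [hπ, hπ]; exact hequiv l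
  · intro k hk; exact goff l k hk
  · rw [hπ]; exact (keyπ l).symm
  · rw [hπ]; exact hπ0 l
end
end

section
/- Let N ≥ 1, let λ ∈ ℝ^N with λ_k > 0 for all k and λ' ∈ ℝ^N with λ'_l > 0 for all l, let τ and τ' be permutations of {1,…,N}, and let Γ, g be N×N complex matrices with det g ≠ 0. Suppose that in ℂ[X_1,…,X_N,Y_1,…,Y_N], for every l = 1,…,N, both identities hold: (i) Σ_{k=1}^N g_{l,k}·X_k·Y_{τ(k)} = (Σ_{i=1}^N Γ_{l,i}·X_i)·(Σ_{j=1}^N conj(Γ_{τ'(l),j})·Y_j), and (ii) Σ_{k=1}^N λ_k·g_{l,k}·X_k·X_{τ(k)} = λ'_l·(Σ_{i=1}^N Γ_{l,i}·X_i)·(Σ_{j=1}^N Γ_{τ'(l),j}·X_j). Then det Γ ≠ 0; there is a permutation π of {1,…,N} such that for every l the entry Γ_{l,k} is nonzero exactly when k = π(l) and τ(π(l)) = π(τ'(l)); moreover λ'_l = λ_{π(l)} for every l, and every entry of Γ is a real number. -/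
noncomputable section

open MvPolynomial

/-- Let `λ, λ'` have positive entries, `τ, τ'` be permutations of `{1,…,N}`,
and `Γ, g` be `N×N` complex matrices with `det g ≠ 0`. Suppose that in
`ℂ[X_1,…,X_N,Y_1,…,Y_N]` (here `X_k = X (Sum.inl k)`, `Y_j = X (Sum.inr j)`) both
(i) `Σ_k g_{l,k}·X_k·Y_{τ(k)} = (Σ_i Γ_{l,i}·X_i)·(Σ_j conj(Γ_{τ'(l),j})·Y_j)` and
(ii) `Σ_k λ_k·g_{l,k}·X_k·X_{τ(k)} = λ'_l·(Σ_i Γ_{l,i}·X_i)·(Σ_j Γ_{τ'(l),j}·X_j)` hold for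
every `l`. Then `det Γ ≠ 0`; there is a permutation `π` with, for every `l`,
`Γ_{l,k} ≠ 0` exactly when `k = π(l)` and `τ(π(l)) = π(τ'(l))`; moreover
`λ'_l = λ_{π(l)}` for every `l`, and every entry of `Γ` is real. -/
theorem linear_part_lambda_and_reality (N : ℕ) (hN : 1 ≤ N)
    (lam lam' : Fin N → ℝ) (hlam : ∀ k, 0 < lam k) (hlam' : ∀ l, 0 < lam' l)
    (τ τ' : Equiv.Perm (Fin N)) (Γ g : Matrix (Fin N) (Fin N) ℂ) (hg : g.det ≠ 0)
    (hi : ∀ l : Fin N,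
        (∑ k : Fin N, C (g l k) * X (Sum.inl k) * X (Sum.inr (τ k))
            : MvPolynomial (Fin N ⊕ Fin N) ℂ) =
          (∑ i : Fin N, C (Γ l i) * X (Sum.inl i)) *
            (∑ j : Fin N, C ((starRingEnd ℂ) (Γ (τ' l) j)) * X (Sum.inr j)))
    (hii : ∀ l : Fin N,
        (∑ k : Fin N, C ((lam k : ℂ) * g l k) * X (Sum.inl k) * X (Sum.inl (τ k))
            : MvPolynomial (Fin N ⊕ Fin N) ℂ) =
          C ((lam' l : ℂ)) * ((∑ i : Fin N, C (Γ l i) * X (Sum.inl i)) *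
            (∑ j : Fin N, C (Γ (τ' l) j) * X (Sum.inl j)))) :
    Γ.det ≠ 0 ∧
      (∃ π : Equiv.Perm (Fin N),
        (∀ l : Fin N, (∀ k : Fin N, Γ l k ≠ 0 ↔ k = π l) ∧ τ (π l) = π (τ' l)) ∧
        (∀ l : Fin N, lam' l = lam (π l))) ∧
      (∀ l k : Fin N, (Γ l k).im = 0) := by
  classical
  have hkey : ∀ l i j : Fin N,
      Γ l i * (starRingEnd ℂ) (Γ (τ' l) j) = if τ i = j then g l i else 0 := by
    intro l i j
    have h := congrArg (eval (Sum.elim (fun k => if k = i then (1:ℂ) else 0)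
        (fun k => if k = j then (1:ℂ) else 0))) (hi l)
    simp only [map_sum, map_mul, eval_C, eval_X, Sum.elim_inl, Sum.elim_inr,
      mul_ite, ite_mul, mul_one, mul_zero, zero_mul, one_mul] at h
    rw [Finset.sum_eq_single i (fun b _ hb => by simp [hb]) (by simp)] at h
    simpa using h.symm
  have hgk : ∀ l k, g l k = Γ l k * (starRingEnd ℂ) (Γ (τ' l) (τ k)) := by
    intro l k
    have := hkey l k (τ k); simpa using this.symm
  have hrow : ∀ l, ∃ k, g l k ≠ 0 := by
    intro l
    by_contra h
    push_neg at h
    exact hg (Matrix.det_eq_zero_of_row_eq_zero l h)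
  have hex : ∀ l, ∃ k, Γ l k ≠ 0 := by
    intro l
    obtain ⟨k, hk⟩ := hrow l
    exact ⟨k, fun h0 => hk (by rw [hgk l k, h0, zero_mul])⟩
  choose πf hπf using hex
  have huniq : ∀ l k, Γ l k ≠ 0 → k = πf l := by
    intro l k hk
    obtain ⟨k0, hk0⟩ := hrow l
    have h2 : Γ (τ' l) (τ k0) ≠ 0 := fun h0 => hk0 (by rw [hgk l k0, h0, map_zero, mul_zero])
    have h2' : (starRingEnd ℂ) (Γ (τ' l) (τ k0)) ≠ 0 := by
      simpa using h2
    have hstep : ∀ m, Γ l m ≠ 0 → m = k0 := by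
      intro m hm
      have e1 := hkey l m (τ k0)
      by_contra hmk
      rw [if_neg (fun h => hmk (τ.injective h))] at e1
      exact (mul_ne_zero hm h2') e1
    rw [hstep k hk, hstep (πf l) (hπf l)]
  have hiff : ∀ l k, Γ l k ≠ 0 ↔ k = πf l := by
    intro l k
    exact ⟨huniq l k, fun h => h ▸ hπf l⟩
  have hΓ0 : ∀ l k, k ≠ πf l → Γ l k = 0 := by
    intro l k hk
    by_contra h
    exact hk (huniq l k h)
  have hg0 : ∀ l k, k ≠ πf l → g l k = 0 := by
    intro l k hk
    rw [hgk, hΓ0 l k hk, zero_mul]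
  have hgd : ∀ l, g l (πf l) ≠ 0 := by
    intro l
    obtain ⟨k, hk⟩ := hrow l
    have : k = πf l := by
      by_contra h
      exact hk (hg0 l k h)
    rwa [this] at hk
  have hτ : ∀ l, τ (πf l) = πf (τ' l) := by
    intro l
    have h2 : Γ (τ' l) (τ (πf l)) ≠ 0 := fun h0 => hgd l (by rw [hgk, h0, map_zero, mul_zero])
    exact huniq (τ' l) _ h2
  have hinj : Function.Injective πf := by
    intro a b hab
    by_contra hne
    apply hg
    have hga := hgd a
    set c : ℂ := -(g b (πf a) / g a (πf a)) with hc
    have hrow0 : ∀ k, g b k + c * g a k = 0 := by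
      intro k
      by_cases hk : k = πf a
      · subst hk
        rw [hc, neg_mul, div_mul_cancel₀ _ hga, add_neg_cancel]
      · rw [hg0 b k (by rw [← hab]; exact hk), hg0 a k hk, mul_zero, add_zero]
    have hdet := Matrix.det_updateRow_add_smul_self g (Ne.symm hne) c
    rw [← hdet]
    apply Matrix.det_eq_zero_of_row_eq_zero b
    intro j
    rw [Matrix.updateRow_self]
    simpa using hrow0 j
  let π : Equiv.Perm (Fin N) := Equiv.ofBijective πf (Finite.injective_iff_bijective.mp hinj)
  have hπ : ∀ l, π l = πf l := fun l => rfl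
  -- identity (ii) evaluated at all-ones
  have hlameq : ∀ l, (lam (πf l) : ℂ) * (starRingEnd ℂ) (Γ (τ' l) (πf (τ' l)))
      = (lam' l : ℂ) * Γ (τ' l) (πf (τ' l)) := by
    intro l
    have h := congrArg (eval (Sum.elim (fun _ => (1:ℂ)) (fun _ => 0))) (hii l)
    simp only [map_sum, map_mul, eval_C, eval_X, Sum.elim_inl, mul_one] at h
    rw [Finset.sum_eq_single (πf l) (fun b _ hb => by rw [hg0 l b hb, mul_zero]) (by simp),
      Finset.sum_eq_single (πf l) (fun b _ hb => hΓ0 l b hb) (by simp),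
      Finset.sum_eq_single (πf (τ' l)) (fun b _ hb => hΓ0 (τ' l) b hb) (by simp)] at h
    rw [hgk l (πf l), hτ l] at h
    have hb : Γ l (πf l) ≠ 0 := hπf l
    have h' : Γ l (πf l) * ((lam (πf l) : ℂ) * (starRingEnd ℂ) (Γ (τ' l) (πf (τ' l))))
        = Γ l (πf l) * ((lam' l : ℂ) * Γ (τ' l) (πf (τ' l))) := by
      linear_combination h
    exact mul_left_cancel₀ hb h'
  have hlam_eq : ∀ l, lam' l = lam (πf l) := by
    intro l
    have h := congrArg (‖·‖) (hlameq l)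
    have ha : Γ (τ' l) (πf (τ' l)) ≠ 0 := hπf (τ' l)
    simp only [norm_mul, Complex.norm_conj, Complex.norm_real, Real.norm_eq_abs] at h
    have := mul_right_cancel₀ (by simpa using ha : ‖Γ (τ' l) (πf (τ' l))‖ ≠ 0) h
    rw [abs_of_pos (hlam _), abs_of_pos (hlam' _)] at this
    exact this.symm
  have hreal : ∀ l, (Γ (τ' l) (πf (τ' l))).im = 0 := by
    intro l
    have h := hlameq l
    rw [hlam_eq l] at h
    have := mul_left_cancel₀ (by exact_mod_cast (hlam (πf l)).ne' : ((lam (πf l) : ℂ)) ≠ 0) h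
    exact (Complex.conj_eq_iff_im.mp this)
  refine ⟨?_, ⟨π, fun l => ⟨fun k => hiff l k, hτ l⟩, fun l => hlam_eq l⟩, ?_⟩
  · rw [Matrix.det_apply']
    rw [Finset.sum_eq_single π.symm]
    · apply mul_ne_zero
      · exact Int.cast_ne_zero.mpr (Units.ne_zero _)
      · apply Finset.prod_ne_zero_iff.mpr
        intro i _
        have hpi : πf (π.symm i) = i := (hπ _).symm.trans (Equiv.apply_symm_apply π i)
        exact (hiff _ _).mpr hpi.symm
    · intro σ _ hσ
      have : ∃ i, σ i ≠ π.symm i := by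
        by_contra hc
        push_neg at hc
        exact hσ (Equiv.ext hc)
      obtain ⟨i, hi'⟩ := this
      have h0 : Γ (σ i) i = 0 := by
        apply hΓ0
        intro hip
        apply hi'
        have hpi : π (σ i) = i := (hπ _).trans hip.symm
        exact (Equiv.eq_symm_apply π).mpr hpi
      have hz : (∏ i : Fin N, Γ (σ i) i) = 0 := Finset.prod_eq_zero (Finset.mem_univ i) h0
      rw [hz, mul_zero]
    · simp
  · intro l k
    by_cases hk : k = πf l
    · subst hk
      have := hreal (τ'.symm l)
      simpa using this
    · rw [hΓ0 l k hk]
      simp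
end
end

section
/- Let λ ∈ ℝ with 0 < λ < 1/2. In the polynomial ring ℂ[z,ζ] in two variables set q = z·ζ + λ·(z² + ζ²) and let T be the differential operator T = ∂²/∂z∂ζ + λ·(∂²/∂z² + ∂²/∂ζ²). Then for every integer p ≥ 2 and every homogeneous polynomial P of degree p there exist a unique homogeneous polynomial A of degree p−2 and a unique homogeneous polynomial C of degree p such that P = A·q + C and T(C) = 0. -/
noncomputable section

open MvPolynomial

/-- The quadric `q = z·ζ + λ·(z² + ζ²)` in `ℂ[z,ζ]`, where `z = X 0`, `ζ = X 1`. -/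
def qPoly2 (lam : ℝ) : MvPolynomial (Fin 2) ℂ :=
  X 0 * X 1 + C (lam : ℂ) * (X 0 ^ 2 + X 1 ^ 2)

/-- The Fischer differential operator `T = ∂²/∂z∂ζ + λ·(∂²/∂z² + ∂²/∂ζ²)`
associated to `q = z·ζ + λ·(z² + ζ²)`. -/
def fischerOp2 (lam : ℝ) (P : MvPolynomial (Fin 2) ℂ) : MvPolynomial (Fin 2) ℂ :=
  pderiv 0 (pderiv 1 P) + C (lam : ℂ) * (pderiv 0 (pderiv 0 P) + pderiv 1 (pderiv 1 P))

namespace FischerAux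

abbrev MP := MvPolynomial (Fin 2) ℂ

/-- The factorial weight of a monomial exponent. -/
def wt (m : Fin 2 →₀ ℕ) : ℝ := (Nat.factorial (m 0)) * (Nat.factorial (m 1))

lemma wt_pos (m : Fin 2 →₀ ℕ) : 0 < wt m := by
  unfold wt
  positivity

/-- The Fischer pairing. -/
def fpair (P Q : MP) : ℂ :=
  ∑ m ∈ P.support, ((wt m : ℂ) * (starRingEnd ℂ) (MvPolynomial.coeff m P) * MvPolynomial.coeff m Q)

lemma fpair_eq_sum_of_subset {P Q : MP} {s : Finset (Fin 2 →₀ ℕ)} (h : P.support ⊆ s) :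
    fpair P Q = ∑ m ∈ s, ((wt m : ℂ) * (starRingEnd ℂ) (MvPolynomial.coeff m P)
      * MvPolynomial.coeff m Q) := by
  refine Finset.sum_subset h ?_
  intro m _ hm
  simp [MvPolynomial.notMem_support_iff.mp hm]

lemma fpair_add_left (P P' Q : MP) : fpair (P + P') Q = fpair P Q + fpair P' Q := by
  classical
  set s := (P + P').support ∪ (P.support ∪ P'.support) with hs
  rw [fpair_eq_sum_of_subset (P := P + P') (Q := Q) (Finset.subset_union_left),
    fpair_eq_sum_of_subset (P := P) (Q := Q)
      ((Finset.subset_union_left).trans Finset.subset_union_right),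
    fpair_eq_sum_of_subset (P := P') (Q := Q)
      ((Finset.subset_union_right).trans Finset.subset_union_right),
    ← Finset.sum_add_distrib]
  refine Finset.sum_congr rfl ?_
  intro m _
  simp only [coeff_add, map_add]
  ring

lemma fpair_zero_right (P : MP) : fpair P 0 = 0 := by
  simp [fpair]

lemma fpair_monomial (m : Fin 2 →₀ ℕ) (c : ℂ) (Q : MP) :
    fpair (monomial m c) Q = (wt m : ℂ) * (starRingEnd ℂ) c * MvPolynomial.coeff m Q := by
  classical
  by_cases hc : c = 0
  · simp [hc, fpair]
  · rw [fpair, support_monomial, if_neg hc, Finset.sum_singleton, coeff_monomial, if_pos rfl]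

lemma coeff_pderiv' (i : Fin 2) (Q : MP) (m : Fin 2 →₀ ℕ) :
    MvPolynomial.coeff m (pderiv i Q)
      = ((m i : ℂ) + 1) * MvPolynomial.coeff (m + Finsupp.single i 1) Q := by
  classical
  induction Q using MvPolynomial.induction_on' with
  | add p q hp hq =>
    simp only [map_add, coeff_add, hp, hq]
    ring
  | monomial s a =>
    rw [pderiv_monomial]
    rw [coeff_monomial, coeff_monomial]
    by_cases h : s = m + Finsupp.single i 1
    · subst h
      have h1 : m + Finsupp.single i 1 - Finsupp.single i 1 = m := by
        ext j
        simp [Finsupp.tsub_apply]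
      rw [if_pos h1, if_pos rfl, Finsupp.add_apply, Finsupp.single_eq_same]
      push_cast
      ring
    · rw [if_neg h]
      by_cases h2 : s - Finsupp.single i 1 = m
      · have hsi : s i = 0 := by
          by_contra hsi
          apply h
          ext j
          have hj := DFunLike.congr_fun h2 j
          rw [Finsupp.tsub_apply, Finsupp.single_apply] at hj
          simp only [Finsupp.add_apply, Finsupp.single_apply]
          by_cases hij : i = j
          · subst hij
            simp only [if_pos] at hj ⊢
            omega
          · simp only [if_neg hij] at hj ⊢
            omega
        rw [if_pos h2, hsi]
        simp
      · rw [if_neg h2]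
        ring

lemma wt_add_single (m : Fin 2 →₀ ℕ) (i : Fin 2) :
    wt (m + Finsupp.single i 1) = ((m i : ℝ) + 1) * wt m := by
  fin_cases i <;>
  · simp only [wt, Finsupp.add_apply, Finsupp.single_apply]
    norm_num [Nat.factorial_succ]
    push_cast
    ring

lemma fpair_X_mul (i : Fin 2) (P Q : MP) :
    fpair (X i * P) Q = fpair P (pderiv i Q) := by
  classical
  induction P using MvPolynomial.induction_on' with
  | add p q hp hq =>
    rw [mul_add, fpair_add_left, fpair_add_left, hp, hq]
  | monomial s a =>
    rw [X, monomial_mul, one_mul, fpair_monomial, fpair_monomial, coeff_pderiv']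
    rw [add_comm (Finsupp.single i 1) s, wt_add_single]
    push_cast
    ring

lemma fpair_C_mul_left (c : ℂ) (P Q : MP) :
    fpair (C c * P) Q = (starRingEnd ℂ) c * fpair P Q := by
  classical
  induction P using MvPolynomial.induction_on' with
  | add p q hp hq =>
    rw [mul_add, fpair_add_left, fpair_add_left, hp, hq, mul_add]
  | monomial s a =>
    rw [C_mul_monomial, fpair_monomial, fpair_monomial, map_mul]
    ring

lemma fpair_adjoint (lam : ℝ) (A B : MP) :
    fpair (qPoly2 lam * A) B = fpair A (fischerOp2 lam B) := by
  have hq : qPoly2 lam * A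
      = X 1 * (X 0 * A) + (C (lam : ℂ) * (X 0 * (X 0 * A)) + C (lam : ℂ) * (X 1 * (X 1 * A))) := by
    unfold qPoly2; ring
  rw [hq, fpair_add_left, fpair_add_left, fpair_X_mul, fpair_X_mul,
    fpair_C_mul_left, fpair_C_mul_left, fpair_X_mul, fpair_X_mul, fpair_X_mul, fpair_X_mul]
  have hcl : (starRingEnd ℂ) ((lam : ℂ)) = (lam : ℂ) := Complex.conj_ofReal lam
  rw [hcl]
  have hlin : ∀ Q Q' : MP, fpair A (Q + Q') = fpair A Q + fpair A Q' := by
    intro Q Q'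
    simp [fpair, Finset.sum_add_distrib, mul_add]
  have hmul : ∀ Q : MP, fpair A (C (lam : ℂ) * Q) = (lam : ℂ) * fpair A Q := by
    intro Q
    simp only [fpair, coeff_C_mul, Finset.mul_sum]
    refine Finset.sum_congr rfl fun m _ => by ring
  rw [fischerOp2, hlin, hmul, hlin]
  ring

lemma fpair_self_ne_zero {P : MP} (hP : P ≠ 0) : fpair P P ≠ 0 := by
  classical
  have hterm : ∀ m ∈ P.support,
      ((wt m : ℂ) * (starRingEnd ℂ) (MvPolynomial.coeff m P) * MvPolynomial.coeff m P)
        = ((wt m * Complex.normSq (MvPolynomial.coeff m P) : ℝ) : ℂ) := by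
    intro m _
    rw [mul_assoc, ← Complex.normSq_eq_conj_mul_self]
    push_cast
    ring
  rw [fpair, Finset.sum_congr rfl hterm, ← Complex.ofReal_sum]
  have hpos : 0 < ∑ m ∈ P.support, wt m * Complex.normSq (MvPolynomial.coeff m P) := by
    refine Finset.sum_pos ?_ ?_
    · intro m hm
      have hc : MvPolynomial.coeff m P ≠ 0 := MvPolynomial.mem_support_iff.mp hm
      exact mul_pos (wt_pos m) (Complex.normSq_pos.mpr hc)
    · exact Finset.nonempty_iff_ne_empty.mpr
        (fun h => hP (MvPolynomial.support_eq_empty.mp h))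
  exact_mod_cast ne_of_gt hpos

lemma qPoly2_ne_zero {lam : ℝ} (h0 : 0 < lam) : qPoly2 lam ≠ 0 := by
  intro h
  have := congrArg (eval fun _ => (1 : ℂ)) h
  simp [qPoly2] at this
  have h3 : ((1 + lam * 2 : ℝ) : ℂ) = 0 := by push_cast; linear_combination this
  have h4 : (1 + lam * 2 : ℝ) = 0 := by exact_mod_cast h3
  nlinarith

/-- The key cancellation: if `T(q·A) = 0` then `A = 0`. -/
lemma cancel {lam : ℝ} (h0 : 0 < lam) {A : MP} (h : fischerOp2 lam (qPoly2 lam * A) = 0) :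
    A = 0 := by
  have h2 : fpair (qPoly2 lam * A) (qPoly2 lam * A) = 0 := by
    rw [fpair_adjoint, h, fpair_zero_right]
  have h3 : qPoly2 lam * A = 0 := by
    by_contra hne
    exact fpair_self_ne_zero hne h2
  rcases mul_eq_zero.mp h3 with h4 | h4
  · exact absurd h4 (qPoly2_ne_zero h0)
  · exact h4

lemma isHomogeneous_pderiv {i : Fin 2} {Q : MP} {n : ℕ} (h : Q.IsHomogeneous n) :
    (pderiv i Q).IsHomogeneous (n - 1) := by
  intro d hd
  rw [coeff_pderiv'] at hd
  have hc : MvPolynomial.coeff (d + Finsupp.single i 1) Q ≠ 0 := by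
    intro hzero
    rw [hzero, mul_zero] at hd
    exact hd rfl
  have hdeg : Finsupp.weight (1 : Fin 2 → ℕ) (d + Finsupp.single i 1) = n := h hc
  have hwadd := (Finsupp.weight (1 : Fin 2 → ℕ)).map_add d (Finsupp.single i 1)
  have hws : Finsupp.weight (1 : Fin 2 → ℕ) (Finsupp.single i 1) = 1 := by
    simp [Finsupp.weight, Finsupp.linearCombination_single]
  show Finsupp.weight (1 : Fin 2 → ℕ) d = n - 1
  omega

lemma isHomogeneous_fischerOp2 {lam : ℝ} {Q : MP} {n : ℕ} (h : Q.IsHomogeneous n) :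
    (fischerOp2 lam Q).IsHomogeneous (n - 2) := by
  have key : ∀ i j : Fin 2, (pderiv i (pderiv j Q)).IsHomogeneous (n - 2) := by
    intro i j
    have h1 : (pderiv j Q).IsHomogeneous (n - 1) := isHomogeneous_pderiv h
    have h2 : (pderiv i (pderiv j Q)).IsHomogeneous (n - 1 - 1) := isHomogeneous_pderiv h1
    have : n - 1 - 1 = n - 2 := by omega
    rwa [this] at h2
  have hCmul : ∀ R : MP, R.IsHomogeneous (n - 2) →
      (C (lam : ℂ) * R).IsHomogeneous (n - 2) := by
    intro R hR
    rw [← MvPolynomial.smul_eq_C_mul]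
    exact Submodule.smul_mem (homogeneousSubmodule (Fin 2) ℂ (n - 2)) _ hR
  exact (key 0 1).add (hCmul _ ((key 0 0).add (key 1 1)))

lemma isHomogeneous_qPoly2 (lam : ℝ) : (qPoly2 lam).IsHomogeneous 2 := by
  have h1 : ((X 0 * X 1 : MP)).IsHomogeneous 2 :=
    (isHomogeneous_X ℂ (0 : Fin 2)).mul (isHomogeneous_X ℂ (1 : Fin 2))
  have h2 : ((X 0 ^ 2 + X 1 ^ 2 : MP)).IsHomogeneous 2 := by
    have ha : ((X 0 : MP) ^ 2).IsHomogeneous 2 :=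
      (isHomogeneous_X ℂ (0 : Fin 2)).pow 2
    have hb : ((X 1 : MP) ^ 2).IsHomogeneous 2 :=
      (isHomogeneous_X ℂ (1 : Fin 2)).pow 2
    exact ha.add hb
  have h3 : ((C (lam : ℂ) * (X 0 ^ 2 + X 1 ^ 2) : MP)).IsHomogeneous 2 := by
    rw [← MvPolynomial.smul_eq_C_mul]
    exact Submodule.smul_mem (homogeneousSubmodule (Fin 2) ℂ 2) _ h2
  exact h1.add h3

lemma fischerOp2_add (lam : ℝ) (P Q : MP) :
    fischerOp2 lam (P + Q) = fischerOp2 lam P + fischerOp2 lam Q := by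
  simp only [fischerOp2, map_add]
  ring

lemma fischerOp2_sub (lam : ℝ) (P Q : MP) :
    fischerOp2 lam (P - Q) = fischerOp2 lam P - fischerOp2 lam Q := by
  simp only [fischerOp2, map_sub]
  ring

lemma fischerOp2_smul (lam : ℝ) (c : ℂ) (P : MP) :
    fischerOp2 lam (c • P) = c • fischerOp2 lam P := by
  simp only [MvPolynomial.smul_eq_C_mul, fischerOp2, pderiv_C_mul]
  ring

end FischerAux

open FischerAux in
/-- **Fischer decomposition.** Let `0 < λ < 1/2`. For every `p ≥ 2` and every
homogeneous polynomial `P` of degree `p` there exist a unique homogeneous `A` of degree `p−2`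
and a unique homogeneous `C` of degree `p` such that `P = A·q + C` and `T(C) = 0`. -/
theorem fischer_decomposition_unique (lam : ℝ) (h0 : 0 < lam) (h1 : lam < 1 / 2)
    (p : ℕ) (hp : 2 ≤ p) (P : MvPolynomial (Fin 2) ℂ) (hP : P.IsHomogeneous p) :
    ∃! AC : MvPolynomial (Fin 2) ℂ × MvPolynomial (Fin 2) ℂ,
      AC.1.IsHomogeneous (p - 2) ∧ AC.2.IsHomogeneous p ∧
      P = AC.1 * qPoly2 lam + AC.2 ∧ fischerOp2 lam AC.2 = 0 := by
  classical
  set n := p - 2 with hn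
  have hpn : 2 + n = p := by omega
  set V := homogeneousSubmodule (Fin 2) ℂ n with hV
  haveI : FiniteDimensional ℂ V := by
    refine Submodule.finiteDimensional_of_le (S₂ := restrictTotalDegree (Fin 2) ℂ n) ?_
    intro x hx
    rw [mem_restrictTotalDegree]
    exact MvPolynomial.IsHomogeneous.totalDegree_le hx
  -- the map A ↦ T(q·A) on V
  have hmemphi : ∀ A : V, fischerOp2 lam (qPoly2 lam * (A : MP)) ∈ V := by
    intro A
    have hqA : ((qPoly2 lam * (A : MP))).IsHomogeneous (2 + n) :=
      (isHomogeneous_qPoly2 lam).mul A.2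
    have := isHomogeneous_fischerOp2 (lam := lam) hqA
    have h2 : 2 + n - 2 = n := by omega
    rwa [h2] at this
  let φ : V →ₗ[ℂ] V :=
    { toFun := fun A => ⟨fischerOp2 lam (qPoly2 lam * (A : MP)), hmemphi A⟩
      map_add' := by
        intro A B
        ext1
        simp only [Submodule.coe_add, mul_add, fischerOp2_add]
      map_smul' := by
        intro c A
        ext1
        simp only [Submodule.coe_smul, RingHom.id_apply, mul_smul_comm, fischerOp2_smul] }
  have hinj : Function.Injective φ := by
    refine (injective_iff_map_eq_zero φ).mpr ?_
    intro A hA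
    have h2 : fischerOp2 lam (qPoly2 lam * (A : MP)) = 0 := by
      have := congrArg (Subtype.val) hA
      simpa [φ] using this
    have := cancel h0 h2
    exact Subtype.ext this
  have hsurj : Function.Surjective φ := LinearMap.injective_iff_surjective.mp hinj
  -- T(P) lives in V
  have hTP : fischerOp2 lam P ∈ V := by
    have := isHomogeneous_fischerOp2 (lam := lam) hP
    rwa [hn] at *
  obtain ⟨A, hA⟩ := hsurj ⟨fischerOp2 lam P, hTP⟩
  have hA' : fischerOp2 lam (qPoly2 lam * (A : MP)) = fischerOp2 lam P := by
    have := congrArg (Subtype.val) hA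
    simpa [φ] using this
  set Cpoly : MvPolynomial (Fin 2) ℂ := P - (A : MP) * qPoly2 lam with hCdef
  have hCP : P = (A : MP) * qPoly2 lam + Cpoly := by rw [hCdef]; ring
  have hqA_homog : (((A : MP)) * qPoly2 lam).IsHomogeneous p := by
    have := A.2
    rw [mem_homogeneousSubmodule] at this
    have h2 := this.mul (isHomogeneous_qPoly2 lam)
    have h3 : n + 2 = p := by omega
    rwa [h3] at h2
  have hC_homog : Cpoly.IsHomogeneous p := hP.sub hqA_homog
  have hTC : fischerOp2 lam Cpoly = 0 := by
    rw [hCdef, fischerOp2_sub, mul_comm ((A : MP)) (qPoly2 lam), hA', sub_self]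
  refine ⟨((A : MP), Cpoly), ⟨A.2, hC_homog, hCP, hTC⟩, ?_⟩
  rintro ⟨A', C'⟩ ⟨hA'h, hC'h, hEq', hT'⟩
  dsimp only at hA'h hC'h hEq' hT'
  -- uniqueness
  have hdiff : qPoly2 lam * (A' - (A : MP)) = Cpoly - C' := by
    have : A' * qPoly2 lam + C' = (A : MP) * qPoly2 lam + Cpoly := by
      rw [← hEq', ← hCP]
    linear_combination this
  have hTdiff : fischerOp2 lam (qPoly2 lam * (A' - (A : MP))) = 0 := by
    rw [hdiff, fischerOp2_sub, hTC, hT', sub_self]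
  have hAA : A' - (A : MP) = 0 := cancel h0 hTdiff
  have hA'A : A' = (A : MP) := by linear_combination hAA
  have hC'C : C' = Cpoly := by
    have h2 : (A : MP) * qPoly2 lam + Cpoly = A' * qPoly2 lam + C' := hCP.symm.trans hEq'
    rw [hA'A] at h2
    exact (add_left_cancel h2).symm
  simp [Prod.ext_iff, hA'A, hC'C]
end
end
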